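/- The Casimir element C = EF + λ²(q⁻¹μK² + qνK⁻²) lies in the center of U_q(μ,ν); in particular CE = EC, CF = FC, and CK = KC. -/

import Mathlib

set_option maxHeartbeats 2000000 in
/-- The Casimir element C = EF + λ²(q⁻¹μK² + qνK⁻²) lies in the center of
U_q(μ,ν) (formalized: in any unital ℂ-algebra with elements K, K⁻¹, E, F satisfying the
defining relations, C commutes with every element of the subalgebra they generate;
in particular CE = EC, CF = FC and CK = KC). -/
theorem casimir_central
    {A : Type*} [Ring A] [Algebra ℂ A]
    (q μ ν : ℝ) (hq0 : 0 < q) (hq1 : q < 1)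
    (lam : ℝ) (hlam : lam = (q - q⁻¹)⁻¹)
    (K Kinv E F : A)
    (hKinvK : Kinv * K = 1) (hKKinv : K * Kinv = 1)
    (hKE : K * E = (q : ℂ) • (E * K))
    (hKF : K * F = ((q⁻¹ : ℝ) : ℂ) • (F * K))
    (hEF : E * F - F * E =
      (lam : ℂ) • ((μ : ℂ) • (K * K) - (ν : ℂ) • (Kinv * Kinv)))
    (C : A)
    (hC : C = E * F + ((lam ^ 2 * q⁻¹ * μ : ℝ) : ℂ) • (K * K)
                    + ((lam ^ 2 * q * ν : ℝ) : ℂ) • (Kinv * Kinv)) :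
    (∀ x ∈ Algebra.adjoin ℂ ({K, Kinv, E, F} : Set A), C * x = x * C) ∧
    C * E = E * C ∧ C * F = F * C ∧ C * K = K * C := by
  subst hlam
  have hqR : q ≠ 0 := ne_of_gt hq0
  have hq : (q : ℂ) ≠ 0 := by exact_mod_cast hqR
  have hqqR : q - q⁻¹ ≠ 0 := by
    have h1 : (1:ℝ) < q⁻¹ := (one_lt_inv₀ hq0).mpr hq1
    nlinarith
  have hqq : (q : ℂ) - (q : ℂ)⁻¹ ≠ 0 := by
    have : ((q - q⁻¹ : ℝ) : ℂ) ≠ 0 := by exact_mod_cast hqqR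
    push_cast at this
    exact this
  -- rewrite the q⁻¹ coefficient in hKF
  have hKF' : K * F = (q : ℂ)⁻¹ • (F * K) := by rw [hKF]; norm_cast
  -- derived exchange relations (in "move x past the head" form)
  have hKE' : ∀ x : A, K * (E * x) = (q : ℂ) • (E * (K * x)) := fun x => by
    rw [← mul_assoc, hKE, smul_mul_assoc, mul_assoc]
  have hKF'' : ∀ x : A, K * (F * x) = (q : ℂ)⁻¹ • (F * (K * x)) := fun x => by
    rw [← mul_assoc, hKF', smul_mul_assoc, mul_assoc]
  have hKinvE0 : Kinv * E = (q : ℂ)⁻¹ • (E * Kinv) := by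
    have h : Kinv * (K * E) * Kinv = E * Kinv := by
      rw [← mul_assoc, hKinvK, one_mul]
    calc Kinv * E = Kinv * E * (K * Kinv) := by rw [hKKinv, mul_one]
      _ = Kinv * ((q:ℂ)⁻¹ • (K * E)) * Kinv := by
            rw [hKE]; rw [smul_smul, inv_mul_cancel₀ hq, one_smul]
            noncomm_ring
      _ = (q:ℂ)⁻¹ • (Kinv * (K * E) * Kinv) := by
            rw [mul_smul_comm, smul_mul_assoc]
      _ = (q:ℂ)⁻¹ • (E * Kinv) := by rw [h]
  have hKinvF0 : Kinv * F = (q : ℂ) • (F * Kinv) := by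
    have h : Kinv * (K * F) * Kinv = F * Kinv := by
      rw [← mul_assoc, hKinvK, one_mul]
    calc Kinv * F = Kinv * F * (K * Kinv) := by rw [hKKinv, mul_one]
      _ = Kinv * ((q:ℂ) • (K * F)) * Kinv := by
            rw [hKF']; rw [smul_smul, mul_inv_cancel₀ hq, one_smul]
            noncomm_ring
      _ = (q:ℂ) • (Kinv * (K * F) * Kinv) := by
            rw [mul_smul_comm, smul_mul_assoc]
      _ = (q:ℂ) • (F * Kinv) := by rw [h]
  have hKinvE : ∀ x : A, Kinv * (E * x) = (q : ℂ)⁻¹ • (E * (Kinv * x)) := fun x => by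
    rw [← mul_assoc, hKinvE0, smul_mul_assoc, mul_assoc]
  have hKinvF : ∀ x : A, Kinv * (F * x) = (q : ℂ) • (F * (Kinv * x)) := fun x => by
    rw [← mul_assoc, hKinvF0, smul_mul_assoc, mul_assoc]
  have hKKinv' : ∀ x : A, K * (Kinv * x) = x := fun x => by
    rw [← mul_assoc, hKKinv, one_mul]
  have hKinvK' : ∀ x : A, Kinv * (K * x) = x := fun x => by
    rw [← mul_assoc, hKinvK, one_mul]
  have hq2 : (q:ℂ)^2 - 1 ≠ 0 := by
    have e : (q:ℂ)^2 - 1 = (q:ℂ)*((q:ℂ) - (q:ℂ)⁻¹) := by field_simp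
    rw [e]; exact mul_ne_zero hq hqq
  have hinv : ((q:ℂ) - (q:ℂ)⁻¹)⁻¹ = (q:ℂ) * ((q:ℂ)^2 - 1)⁻¹ := by
    have e : (q:ℂ) - (q:ℂ)⁻¹ = ((q:ℂ)^2 - 1) * (q:ℂ)⁻¹ := by field_simp
    rw [e, mul_inv, inv_inv, mul_comm]
  have hFE : F * E = E * F - (((q - q⁻¹)⁻¹ : ℝ) : ℂ) • ((μ : ℂ) • (K * K) - (ν : ℂ) • (Kinv * Kinv)) := by
    rw [← hEF]; noncomm_ring
  have hFE' : ∀ x : A, F * (E * x) =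
      E * (F * x) - (((q - q⁻¹)⁻¹ : ℝ) : ℂ) • ((μ : ℂ) • (K * (K * x)) - (ν : ℂ) • (Kinv * (Kinv * x))) := fun x => by
    rw [← mul_assoc, hFE, sub_mul, smul_mul_assoc, sub_mul, smul_mul_assoc, smul_mul_assoc,
      mul_assoc, mul_assoc, mul_assoc]
  have key : ∀ x ∈ ({K, Kinv, E, F} : Set A), C * x = x * C := by
    intro x hx
    rcases hx with rfl | rfl | rfl | rfl <;>
    · rw [hC]
      simp only [add_mul, mul_add, smul_mul_assoc, mul_smul_comm, mul_assoc,
        hKE, hKE', hKF', hKF'', hKinvE0, hKinvE, hKinvF0, hKinvF, hKKinv', hKinvK',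
        hKKinv, hKinvK, mul_one, one_mul, hFE, hFE',
        smul_sub, sub_smul, smul_add, smul_smul, mul_sub, sub_mul]
      push_cast
      simp only [hinv]
      match_scalars <;> field_simp <;> ring
  refine ⟨fun x hx => ?_, key E (by simp), key F (by simp), key K (by simp)⟩
  induction hx using Algebra.adjoin_induction with
  | mem y hy => exact key y hy
  | algebraMap r => rw [Algebra.commutes]
  | add y z _ _ hy hz => rw [mul_add, add_mul, hy, hz]
  | mul y z _ _ hy hz => rw [← mul_assoc, hy, mul_assoc, hz, mul_assoc]
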